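/- In the setting of the previous lemma, the polynomial Q additionally satisfies: the top (0,1)-homogeneous component Q^{(0,1)}_{n/a} equals (x+1)^{m/a} y^{n/a}, and the top total-degree homogeneous component Q^{(1,1)}_{(m+n)/a} equals x^{m/a}(x+y)^{n/a}, given that F^{(0,1)}_n = (x+1)^m y^n and F^{(1,1)}_{m+n} = x^m (x+y)^n. -/

import Mathlib

section PolyrootSec
open Polynomial
lemma polyroot (a k : ℕ) (ha : 2 ≤ a) (hk : 1 ≤ k) (s e : Polynomial ℂ)
    (hs : s.natDegree ≤ k) (hsc : s.coeff k = 1)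
    (he : ∀ j, (a-1)*k ≤ j → e.coeff j = 0)
    (heq : s ^ a = (X + 1)^(a*k) + e) : s = (X + 1)^k := by
  obtain ⟨b, rfl⟩ : ∃ b, a = b + 2 := ⟨a - 2, by omega⟩
  set a := b + 2 with hadef
  have ha1 : a - 1 = b + 1 := rfl
  have hsd : s.natDegree = k :=
    le_antisymm hs (le_natDegree_of_ne_zero (by rw [hsc]; exact one_ne_zero))
  have hsm : s.Monic := by unfold Polynomial.Monic leadingCoeff; rw [hsd, hsc]
  have hX1 : (X - 1 : Polynomial ℂ) = X - C 1 := by simp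
  have hlin : (X - 1 : Polynomial ℂ).natDegree = 1 := by rw [hX1]; exact natDegree_X_sub_C 1
  set t : Polynomial ℂ := s.comp (X - 1) with ht
  have htd : t.natDegree = k := by rw [ht, natDegree_comp, hlin, hsd, mul_one]
  have htm : t.Monic := by
    unfold Polynomial.Monic
    rw [ht, leadingCoeff_comp (by rw [hlin]; exact one_ne_zero), hsm]
    have : (X - 1 : Polynomial ℂ).leadingCoeff = 1 := by rw [hX1]; exact monic_X_sub_C 1
    rw [this, one_pow, one_mul]
  set E : Polynomial ℂ := e.comp (X - 1) with hE
  have hEdeg : ∀ j, (a-1)*k ≤ j → E.coeff j = 0 := by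
    intro j hj
    rcases eq_or_ne e 0 with h0 | h0
    · simp [hE, h0]
    · have hed : e.natDegree < (a-1)*k := by
        by_contra hc
        have h1 := he e.natDegree (le_of_not_gt hc)
        have h2 := leadingCoeff_ne_zero.mpr h0
        rw [leadingCoeff] at h2
        exact h2 h1
      apply coeff_eq_zero_of_natDegree_lt
      calc E.natDegree ≤ e.natDegree * (X - 1 : Polynomial ℂ).natDegree := natDegree_comp_le
        _ = e.natDegree := by rw [hlin, mul_one]
        _ < (a-1)*k := hed
        _ ≤ j := hj
  have heqt : t ^ a = X ^ (a*k) + E := by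
    have h2 := congrArg (fun p => p.comp (X - 1)) heq
    simp only [pow_comp, add_comp, X_comp, one_comp] at h2
    rw [show (X : Polynomial ℂ) - 1 + 1 = X by ring] at h2
    exact h2
  have htX : t = X ^ k := by
    by_contra hr
    set r : Polynomial ℂ := t - X ^ k with hrdef
    have hrne : r ≠ 0 := sub_ne_zero.mpr hr
    have hdlt : r.natDegree < k := by
      rw [← htd]
      have hdeg : r.degree < t.degree := by
        apply degree_sub_lt
        · rw [degree_eq_natDegree htm.ne_zero, htd, degree_X_pow]
        · exact htm.ne_zero
        · rw [htm, monic_X_pow k]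
      rw [degree_eq_natDegree htm.ne_zero] at hdeg
      exact_mod_cast (natDegree_lt_iff_degree_lt hrne).mpr hdeg
    set d := r.natDegree with hd
    set N := (a-1)*k + d with hN
    have htr : t = X ^ k + r := by rw [hrdef]; ring
    have hcoeff : (t ^ a).coeff N = r.coeff d * a := by
      rw [htr, add_pow, finset_sum_coeff]
      rw [Finset.sum_eq_single (a-1)]
      · have h1 : a - (a-1) = 1 := by omega
        have h2 : a.choose (a-1) = a := by
          rw [Nat.choose_symm (by omega : 1 ≤ a), Nat.choose_one_right]
        rw [h1, h2, pow_one, ← pow_mul, mul_comm k (a-1), mul_assoc]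
        rw [hN, add_comm ((a-1)*k) d, coeff_X_pow_mul]
        rw [← C_eq_natCast, coeff_mul_C]
      · intro i hi hine
        rcases eq_or_ne i a with rfl | hia
        · simp only [Nat.sub_self, pow_zero, Nat.choose_self, Nat.cast_one, mul_one, one_mul,
            ← pow_mul]
          rw [coeff_X_pow]
          have hmul : k * a = (a-1)*k + k := by rw [ha1, hadef]; ring
          have : ¬ (N = k * a) := by omega
          simp [this]
        · apply coeff_eq_zero_of_natDegree_lt
          have hile : i ≤ a - 2 := by
            simp only [Finset.mem_range] at hi; omega
          have step1 : ((X ^ k : Polynomial ℂ) ^ i * r ^ (a - i) * ((a.choose i : ℕ) : Polynomial ℂ)).natDegree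
              ≤ k * i + (a - i) * d := by
            calc ((X ^ k : Polynomial ℂ) ^ i * r ^ (a - i) * ((a.choose i : ℕ) : Polynomial ℂ)).natDegree
                ≤ ((X ^ k : Polynomial ℂ) ^ i * r ^ (a-i)).natDegree
                  + ((a.choose i : ℕ) : Polynomial ℂ).natDegree := natDegree_mul_le
              _ ≤ ((X ^ k : Polynomial ℂ) ^ i).natDegree + (r ^ (a-i)).natDegree + 0 := by
                  rw [natDegree_natCast]; exact add_le_add_left natDegree_mul_le 0
              _ ≤ k * i + (a - i) * d := by
                  rw [add_zero, ← pow_mul, natDegree_X_pow, natDegree_pow]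
          refine lt_of_le_of_lt step1 ?_
          obtain ⟨j, hj⟩ : ∃ j, a - 1 - i = j + 1 := ⟨a - 2 - i, by omega⟩
          have h5 : a - i = j + 2 := by omega
          have h6 : a - 1 = i + (j + 1) := by omega
          rw [hN, h5, h6]
          have hlt : (j+1) * d < (j+1) * k := Nat.mul_lt_mul_of_pos_left hdlt (by omega)
          nlinarith
      · intro h
        exact absurd (Finset.mem_range.mpr (by omega)) h
    have hcoeff2 : (t ^ a).coeff N = 0 := by
      rw [heqt, coeff_add, coeff_X_pow, hEdeg N (by omega)]
      have hmul : a * k = (a-1)*k + k := by rw [ha1, hadef]; ring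
      have : ¬ (N = a * k) := by omega
      simp [this]
    rw [hcoeff] at hcoeff2
    rcases mul_eq_zero.mp hcoeff2 with h | h
    · exact leadingCoeff_ne_zero.mpr hrne h
    · exact (Nat.cast_ne_zero.mpr (by omega : a ≠ 0) : (a:ℂ) ≠ 0) h
  have hfin : t.comp (X + 1) = s := by
    rw [ht, comp_assoc]
    rw [show ((X:Polynomial ℂ) - 1).comp (X + 1) = X by simp [sub_comp]]
    exact comp_X
  rw [htX] at hfin
  rw [← hfin, pow_comp, X_comp]

end PolyrootSec

open MvPolynomial

noncomputable section

abbrev R2 : Type := MvPolynomial (Fin 2) ℂ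

/-- The (0,1)-homogeneous component of `f` of degree `j` (terms with y-exponent `j`). -/
def comp01 (f : R2) (j : ℕ) : R2 :=
  ∑ d ∈ f.support.filter (fun d => d 1 = j), MvPolynomial.monomial d (f.coeff d)

/-- The total-degree (i.e. (1,1)-)homogeneous component of `f` of degree `j`. -/
def comp11 (f : R2) (j : ℕ) : R2 :=
  ∑ d ∈ f.support.filter (fun d => d 0 + d 1 = j), MvPolynomial.monomial d (f.coeff d)

/-- The exponent vector of a monomial, as a point of `ℝ²`. -/
def toR2pt (d : Fin 2 →₀ ℕ) : ℝ × ℝ := ((d 0 : ℝ), (d 1 : ℝ))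

/-- The support of `f`, as a subset of `ℝ²`. -/
def suppSet (f : R2) : Set (ℝ × ℝ) := toR2pt '' (f.support : Set (Fin 2 →₀ ℕ))

/-- The augmented Newton polygon `N⁰(f)`: convex hull of the support together with the origin. -/
def newton0 (f : R2) : Set (ℝ × ℝ) := convexHull ℝ (insert (0, 0) (suppSet f))

/-- The trapezoid `T_{m,n}` with vertices `(0,0), (m+n,0), (m,n), (0,n)`. -/
def Tset (m n : ℝ) : Set (ℝ × ℝ) := {p | 0 ≤ p.2 ∧ p.2 ≤ n ∧ 0 ≤ p.1 ∧ p.1 ≤ m + n - p.2}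

/-- The region `𝒩'' = T_{m/a, n/a} + ((a-1)/a)·(m,n)`. -/
def NsetPP (m n a : ℕ) : Set (ℝ × ℝ) :=
  (fun p : ℝ × ℝ => (p.1 + ((a : ℝ) - 1) * m / a, p.2 + ((a : ℝ) - 1) * n / a)) ''
    Tset ((m : ℝ) / a) ((n : ℝ) / a)

/-- The Jacobian determinant `[f,g] = f_x g_y - f_y g_x`. -/
def jacDet (f g : R2) : R2 :=
  pderiv 0 f * pderiv 1 g - pderiv 1 f * pderiv 0 g

namespace Stmt13Aux

def compGen (w : (Fin 2 →₀ ℕ) → ℕ) (f : R2) (j : ℕ) : R2 :=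
  ∑ d ∈ f.support.filter (fun d => w d = j), MvPolynomial.monomial d (f.coeff d)

lemma comp01_eq (f : R2) (j : ℕ) : comp01 f j = compGen (fun d => d 1) f j := rfl
lemma comp11_eq (f : R2) (j : ℕ) : comp11 f j = compGen (fun d => d 0 + d 1) f j := rfl

lemma coeff_compGen (w : (Fin 2 →₀ ℕ) → ℕ) (f : R2) (j : ℕ) (d : Fin 2 →₀ ℕ) :
    (compGen w f j).coeff d = if w d = j then f.coeff d else 0 := by
  classical
  unfold compGen
  rw [MvPolynomial.coeff_sum]
  simp only [MvPolynomial.coeff_monomial]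
  rw [Finset.sum_ite_eq']
  by_cases hw : w d = j
  · by_cases hd : d ∈ f.support
    · simp [Finset.mem_filter, hd, hw]
    · simp [Finset.mem_filter, hd, hw, MvPolynomial.notMem_support_iff.mp hd]
  · simp [Finset.mem_filter, hw]

lemma compGen_add (w : (Fin 2 →₀ ℕ) → ℕ) (f g : R2) (j : ℕ) :
    compGen w (f + g) j = compGen w f j + compGen w g j := by
  apply MvPolynomial.ext; intro d
  simp only [coeff_compGen, MvPolynomial.coeff_add]
  split <;> simp

lemma compGen_eq_self (w : (Fin 2 →₀ ℕ) → ℕ) (f : R2) (j : ℕ)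
    (h : ∀ d ∈ f.support, w d = j) : compGen w f j = f := by
  apply MvPolynomial.ext; intro d
  rw [coeff_compGen]
  split
  · rfl
  · rename_i hne
    by_contra hc
    exact hne (h d (MvPolynomial.mem_support_iff.mpr (fun h0 => hc h0.symm)))

lemma compGen_eq_zero (w : (Fin 2 →₀ ℕ) → ℕ) (f : R2) (j : ℕ)
    (h : ∀ d ∈ f.support, w d ≠ j) : compGen w f j = 0 := by
  apply MvPolynomial.ext; intro d
  rw [coeff_compGen, MvPolynomial.coeff_zero]
  split
  · rename_i hw
    by_contra hc
    exact h d (MvPolynomial.mem_support_iff.mpr hc) hw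
  · rfl

lemma supp_compGen (w : (Fin 2 →₀ ℕ) → ℕ) (f : R2) (j : ℕ) :
    ∀ d ∈ (compGen w f j).support, d ∈ f.support ∧ w d = j := by
  intro d hd
  rw [MvPolynomial.mem_support_iff, coeff_compGen] at hd
  by_cases hw : w d = j
  · simp only [hw, if_true] at hd
    exact ⟨MvPolynomial.mem_support_iff.mpr hd, hw⟩
  · simp [hw] at hd

lemma compGen_mul (w : (Fin 2 →₀ ℕ) → ℕ) (hw : ∀ u v, w (u + v) = w u + w v)
    (f g : R2) (D E : ℕ) (hf : ∀ d ∈ f.support, w d ≤ D) (hg : ∀ d ∈ g.support, w d ≤ E) :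
    compGen w (f * g) (D + E) = compGen w f D * compGen w g E := by
  classical
  set Pf := compGen w f D with hPf
  set Pg := compGen w g E with hPg
  have hrf : ∀ d ∈ (f - Pf).support, w d < D := by
    intro d hd
    rw [MvPolynomial.mem_support_iff, MvPolynomial.coeff_sub, hPf, coeff_compGen] at hd
    by_cases hwd : w d = D
    · simp [hwd] at hd
    · refine lt_of_le_of_ne (hf d ?_) hwd
      simp only [hwd, if_false, sub_zero] at hd
      exact MvPolynomial.mem_support_iff.mpr hd
  have hrg : ∀ d ∈ (g - Pg).support, w d < E := by
    intro d hd
    rw [MvPolynomial.mem_support_iff, MvPolynomial.coeff_sub, hPg, coeff_compGen] at hd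
    by_cases hwd : w d = E
    · simp [hwd] at hd
    · refine lt_of_le_of_ne (hg d ?_) hwd
      simp only [hwd, if_false, sub_zero] at hd
      exact MvPolynomial.mem_support_iff.mpr hd
  have hsPf : ∀ d ∈ Pf.support, w d = D := fun d hd => (supp_compGen w f D d hd).2
  have hsPg : ∀ d ∈ Pg.support, w d = E := fun d hd => (supp_compGen w g E d hd).2
  have hkey : f * g = Pf * Pg + (Pf * (g - Pg) + ((f - Pf) * Pg + (f - Pf) * (g - Pg))) := by
    ring
  rw [hkey, compGen_add, compGen_add, compGen_add]
  have mulsupp : ∀ (p q : R2) (d : Fin 2 →₀ ℕ), d ∈ (p * q).support →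
      ∃ u ∈ p.support, ∃ v ∈ q.support, u + v = d := by
    intro p q d hd
    have := MvPolynomial.support_mul p q hd
    rwa [Finset.mem_add] at this
  have h1 : compGen w (Pf * Pg) (D + E) = Pf * Pg := by
    apply compGen_eq_self
    intro d hd
    obtain ⟨u, hu, v, hv, rfl⟩ := mulsupp _ _ _ hd
    rw [hw, hsPf u hu, hsPg v hv]
  have h2 : compGen w (Pf * (g - Pg)) (D + E) = 0 := by
    apply compGen_eq_zero
    intro d hd
    obtain ⟨u, hu, v, hv, rfl⟩ := mulsupp _ _ _ hd
    rw [hw, hsPf u hu]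
    have := hrg v hv
    omega
  have h3 : compGen w ((f - Pf) * Pg) (D + E) = 0 := by
    apply compGen_eq_zero
    intro d hd
    obtain ⟨u, hu, v, hv, rfl⟩ := mulsupp _ _ _ hd
    rw [hw, hsPg v hv]
    have := hrf u hu
    omega
  have h4 : compGen w ((f - Pf) * (g - Pg)) (D + E) = 0 := by
    apply compGen_eq_zero
    intro d hd
    obtain ⟨u, hu, v, hv, rfl⟩ := mulsupp _ _ _ hd
    rw [hw]
    have := hrf u hu
    have := hrg v hv
    omega
  rw [h1, h2, h3, h4]
  ring

lemma compGen_pow (w : (Fin 2 →₀ ℕ) → ℕ) (hw : ∀ u v, w (u + v) = w u + w v)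
    (hw0 : w 0 = 0) (Qp : R2) (L : ℕ) (hq : ∀ d ∈ Qp.support, w d ≤ L) (j : ℕ) :
    (∀ d ∈ (Qp ^ j).support, w d ≤ j * L) ∧ compGen w (Qp ^ j) (j * L) = (compGen w Qp L) ^ j := by
  induction j with
  | zero =>
    constructor
    · intro d hd
      rw [pow_zero, MvPolynomial.mem_support_iff, MvPolynomial.coeff_one] at hd
      have : d = 0 := by
        by_contra hc
        simp [Ne.symm hc] at hd
      simp [this, hw0]
    · rw [pow_zero, pow_zero, zero_mul]
      apply compGen_eq_self
      intro d hd
      rw [MvPolynomial.mem_support_iff, MvPolynomial.coeff_one] at hd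
      have : d = 0 := by
        by_contra hc
        simp [Ne.symm hc] at hd
      simp [this, hw0]
  | succ i ih =>
    have hsupp : ∀ d ∈ (Qp ^ (i+1)).support, w d ≤ (i+1) * L := by
      intro d hd
      rw [pow_succ] at hd
      have := MvPolynomial.support_mul _ _ hd
      rw [Finset.mem_add] at this
      obtain ⟨u, hu, v, hv, rfl⟩ := this
      rw [hw]
      have := ih.1 u hu
      have := hq v hv
      nlinarith
    refine ⟨hsupp, ?_⟩
    rw [pow_succ, show (i+1) * L = i * L + L from by ring, compGen_mul w hw _ _ _ _ ih.1 hq,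
      ih.2, pow_succ]

lemma fin2_decomp (d : Fin 2 →₀ ℕ) : d = Finsupp.single 0 (d 0) + Finsupp.single 1 (d 1) := by
  ext i
  fin_cases i <;> simp [Finsupp.single_apply]

lemma eval1_coeff (p : R2) (c : ℕ) (h : ∀ d ∈ p.support, d 1 = c) (j : ℕ) :
    (aeval ![Polynomial.X, (1 : Polynomial ℂ)] p).coeff j
      = p.coeff (Finsupp.single 0 j + Finsupp.single 1 c) := by
  classical
  conv_lhs => rw [p.as_sum]
  rw [map_sum, Polynomial.finset_sum_coeff]
  have hterm : ∀ d ∈ p.support,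
      ((aeval ![Polynomial.X, (1 : Polynomial ℂ)] ((monomial d) (coeff d p))).coeff j)
        = if d = Finsupp.single 0 j + Finsupp.single 1 c then coeff d p else 0 := by
    intro d hd
    rw [aeval_monomial, Finsupp.prod_fintype _ _ (fun i => pow_zero _), Fin.prod_univ_two]
    simp only [Matrix.cons_val_zero, Matrix.cons_val_one, Matrix.head_cons, one_pow, mul_one]
    have : (algebraMap ℂ (Polynomial ℂ)) (coeff d p) = Polynomial.C (coeff d p) := rfl
    rw [this, Polynomial.coeff_C_mul, Polynomial.coeff_X_pow]
    have hiff : (j = d 0) ↔ (d = Finsupp.single 0 j + Finsupp.single 1 c) := by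
      constructor
      · intro hj
        rw [fin2_decomp d, ← hj, h d hd]
      · intro hde
        rw [hde]
        simp [Finsupp.single_apply]
    by_cases hc : j = d 0
    · rw [if_pos hc, if_pos (hiff.mp hc), mul_one]
    · have hne : ¬ (d = Finsupp.single 0 j + Finsupp.single 1 c) := fun hh => hc (hiff.mpr hh)
      rw [if_neg hc, if_neg hne, mul_zero]
  rw [Finset.sum_congr rfl hterm, Finset.sum_ite_eq']
  by_cases hmem : Finsupp.single 0 j + Finsupp.single 1 c ∈ p.support
  · rw [if_pos hmem]
  · rw [if_neg hmem, MvPolynomial.notMem_support_iff.mp hmem]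

lemma eval2_coeff (p : R2) (c : ℕ) (h : ∀ d ∈ p.support, d 0 + d 1 = c) (j : ℕ) :
    (aeval ![(1 : Polynomial ℂ), Polynomial.X] p).coeff j
      = p.coeff (Finsupp.single 0 (c - j) + Finsupp.single 1 j) := by
  classical
  conv_lhs => rw [p.as_sum]
  rw [map_sum, Polynomial.finset_sum_coeff]
  have hterm : ∀ d ∈ p.support,
      ((aeval ![(1 : Polynomial ℂ), Polynomial.X] ((monomial d) (coeff d p))).coeff j)
        = if d = Finsupp.single 0 (c - j) + Finsupp.single 1 j then coeff d p else 0 := by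
    intro d hd
    rw [aeval_monomial, Finsupp.prod_fintype _ _ (fun i => pow_zero _), Fin.prod_univ_two]
    simp only [Matrix.cons_val_zero, Matrix.cons_val_one, Matrix.head_cons, one_pow, one_mul]
    have : (algebraMap ℂ (Polynomial ℂ)) (coeff d p) = Polynomial.C (coeff d p) := rfl
    rw [this, Polynomial.coeff_C_mul, Polynomial.coeff_X_pow]
    have hiff : (j = d 1) ↔ (d = Finsupp.single 0 (c - j) + Finsupp.single 1 j) := by
      constructor
      · intro hj
        have hsum := h d hd
        rw [fin2_decomp d, ← hj]
        have : d 0 = c - j := by omega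
        rw [this]
      · intro hde
        rw [hde]
        simp [Finsupp.single_apply]
    by_cases hc : j = d 1
    · rw [if_pos hc, if_pos (hiff.mp hc), mul_one]
    · have hne : ¬ (d = Finsupp.single 0 (c - j) + Finsupp.single 1 j) := fun hh => hc (hiff.mpr hh)
      rw [if_neg hc, if_neg hne, mul_zero]
  rw [Finset.sum_congr rfl hterm, Finset.sum_ite_eq']
  by_cases hmem : Finsupp.single 0 (c - j) + Finsupp.single 1 j ∈ p.support
  · rw [if_pos hmem]
  · rw [if_neg hmem, MvPolynomial.notMem_support_iff.mp hmem]

lemma slice1_eq (p q : R2) (c : ℕ) (hp : ∀ d ∈ p.support, d 1 = c)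
    (hq : ∀ d ∈ q.support, d 1 = c)
    (h : aeval ![Polynomial.X, (1 : Polynomial ℂ)] p
       = aeval ![Polynomial.X, (1 : Polynomial ℂ)] q) : p = q := by
  apply MvPolynomial.ext
  intro d
  by_cases hd1 : d 1 = c
  · have e1 := eval1_coeff p c hp (d 0)
    have e2 := eval1_coeff q c hq (d 0)
    rw [h] at e1
    have hdd : d = Finsupp.single 0 (d 0) + Finsupp.single 1 c := by
      rw [← hd1]; exact fin2_decomp d
    rw [show (MvPolynomial.coeff d p) = p.coeff d from rfl,
        show (MvPolynomial.coeff d q) = q.coeff d from rfl, hdd, ← e1, e2]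
  · have h1 : coeff d p = 0 := by
      by_contra hc
      exact hd1 (hp d (MvPolynomial.mem_support_iff.mpr hc))
    have h2 : coeff d q = 0 := by
      by_contra hc
      exact hd1 (hq d (MvPolynomial.mem_support_iff.mpr hc))
    rw [h1, h2]

lemma slice2_eq (p q : R2) (c : ℕ) (hp : ∀ d ∈ p.support, d 0 + d 1 = c)
    (hq : ∀ d ∈ q.support, d 0 + d 1 = c)
    (h : aeval ![(1 : Polynomial ℂ), Polynomial.X] p
       = aeval ![(1 : Polynomial ℂ), Polynomial.X] q) : p = q := by
  apply MvPolynomial.ext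
  intro d
  by_cases hd1 : d 0 + d 1 = c
  · have e1 := eval2_coeff p c hp (d 1)
    have e2 := eval2_coeff q c hq (d 1)
    rw [h] at e1
    have hdd : d = Finsupp.single 0 (c - d 1) + Finsupp.single 1 (d 1) := by
      have : d 0 = c - d 1 := by omega
      rw [← this]; exact fin2_decomp d
    rw [show (MvPolynomial.coeff d p) = p.coeff d from rfl,
        show (MvPolynomial.coeff d q) = q.coeff d from rfl, hdd, ← e1, e2]
  · have h1 : coeff d p = 0 := by
      by_contra hc
      exact hd1 (hp d (MvPolynomial.mem_support_iff.mpr hc))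
    have h2 : coeff d q = 0 := by
      by_contra hc
      exact hd1 (hq d (MvPolynomial.mem_support_iff.mpr hc))
    rw [h1, h2]

lemma supp_w_mul (w : (Fin 2 →₀ ℕ) → ℕ) (hw : ∀ u v, w (u + v) = w u + w v)
    {p q : R2} {c e : ℕ} (hp : ∀ d ∈ p.support, w d = c) (hq : ∀ d ∈ q.support, w d = e) :
    ∀ d ∈ (p * q).support, w d = c + e := by
  intro d hd
  have := MvPolynomial.support_mul p q hd
  rw [Finset.mem_add] at this
  obtain ⟨u, hu, v, hv, rfl⟩ := this
  rw [hw, hp u hu, hq v hv]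

lemma supp_w_pow (w : (Fin 2 →₀ ℕ) → ℕ) (hw : ∀ u v, w (u + v) = w u + w v)
    (hw0 : w 0 = 0) {p : R2} {c : ℕ} (hp : ∀ d ∈ p.support, w d = c) (j : ℕ) :
    ∀ d ∈ (p ^ j).support, w d = j * c := by
  induction j with
  | zero =>
    intro d hd
    rw [pow_zero, MvPolynomial.mem_support_iff, MvPolynomial.coeff_one] at hd
    have : d = 0 := by
      by_contra hc
      simp [Ne.symm hc] at hd
    simp [this, hw0]
  | succ i ih =>
    intro d hd
    rw [pow_succ] at hd
    have h2 := supp_w_mul w hw ih hp d hd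
    rw [h2]; ring

lemma supp_X0add1 : ∀ d ∈ ((X 0 + 1 : R2)).support, d 1 = 0 := by
  intro d hd
  have := MvPolynomial.support_add hd
  rw [Finset.mem_union] at this
  rcases this with h | h
  · rw [MvPolynomial.support_X] at h
    simp only [Finset.mem_singleton] at h
    rw [h]
    simp [Finsupp.single_apply]
  · have h1 : (1 : R2) = monomial 0 1 := by simp [MvPolynomial.monomial_zero']
    rw [h1, MvPolynomial.support_monomial] at h
    simp only [one_ne_zero, if_false, Finset.mem_singleton] at h
    rw [h]
    rfl

lemma supp_X0addX1 : ∀ d ∈ ((X 0 + X 1 : R2)).support, d 0 + d 1 = 1 := by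
  intro d hd
  have := MvPolynomial.support_add hd
  rw [Finset.mem_union] at this
  rcases this with h | h <;>
  · rw [MvPolynomial.support_X] at h
    simp only [Finset.mem_singleton] at h
    rw [h]
    simp [Finsupp.single_apply]

end Stmt13Aux

set_option maxHeartbeats 1000000 in
open Stmt13Aux in
/-- the approximate root `Q` has top homogeneous components
`Q^{(0,1)}_{n/a} = (x+1)^{m/a} y^{n/a}` and `Q^{(1,1)}_{(m+n)/a} = x^{m/a}(x+y)^{n/a}`. -/
theorem stmt13 (a m n : ℕ) (ha : 2 ≤ a) (hm : 0 < m)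
    (ham : a ∣ m) (han : a ∣ n) (hmn : m < n) (F Q : R2)
    (hNF : newton0 F = Tset (m : ℝ) (n : ℝ))
    (hF01 : comp01 F n = (X 0 + 1) ^ m * X 1 ^ n)
    (hF11 : comp11 F (m + n) = X 0 ^ m * (X 0 + X 1) ^ n)
    (hNQ : newton0 Q = Tset ((m : ℝ) / a) ((n : ℝ) / a))
    (hQvtx : newton0 (Q - X 0 ^ (m / a) * X 1 ^ (n / a)) ⊂ newton0 Q)
    (hR : suppSet (F - Q ^ a) ⊆ Tset (m : ℝ) (n : ℝ) \ NsetPP m n a) :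
    comp01 Q (n / a) = (X 0 + 1) ^ (m / a) * X 1 ^ (n / a) ∧
      comp11 Q ((m + n) / a) = X 0 ^ (m / a) * (X 0 + X 1) ^ (n / a) := by
  classical
  obtain ⟨k, hmk⟩ := ham
  obtain ⟨l, hnl⟩ := han
  have ha0 : (0:ℕ) < a := by omega
  have hk1 : 1 ≤ k := by nlinarith [hmk ▸ hm]
  have hl1 : 1 ≤ l := by nlinarith [hnl ▸ (lt_trans hm hmn)]
  have hma : m / a = k := by rw [hmk]; exact Nat.mul_div_cancel_left k ha0
  have hna : n / a = l := by rw [hnl]; exact Nat.mul_div_cancel_left l ha0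
  have hmna : (m + n) / a = k + l := by
    rw [hmk, hnl, ← Nat.mul_add]; exact Nat.mul_div_cancel_left _ ha0
  have haR : ((a:ℝ)) ≠ 0 := Nat.cast_ne_zero.mpr (by omega)
  have hmr : (m:ℝ)/a = k := by rw [hmk]; push_cast; field_simp
  have hnr : (n:ℝ)/a = l := by rw [hnl]; push_cast; field_simp
  -- support bounds for Q
  have suppQ : ∀ d ∈ Q.support, d 1 ≤ l ∧ d 0 + d 1 ≤ k + l := by
    intro d hd
    have hsub : suppSet Q ⊆ Tset ((m:ℝ)/a) ((n:ℝ)/a) := by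
      rw [← hNQ]
      exact (Set.subset_insert _ _).trans (subset_convexHull ℝ _)
    have hmem : toR2pt d ∈ Tset ((m:ℝ)/a) ((n:ℝ)/a) :=
      hsub (Set.mem_image_of_mem toR2pt (Finset.mem_coe.mpr hd))
    obtain ⟨h1, h2, h3, h4⟩ := hmem
    simp only [toR2pt] at h1 h2 h3 h4
    rw [hnr] at h2
    rw [hmr, hnr] at h4
    constructor
    · exact_mod_cast h2
    · have : (d 0:ℝ) + d 1 ≤ k + l := by linarith
      exact_mod_cast this
  -- vertex coefficient of Q is 1
  set v : Fin 2 →₀ ℕ := Finsupp.single 0 k + Finsupp.single 1 l with hv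
  have hv0 : v 0 = k := by simp [hv, Finsupp.single_apply]
  have hv1 : v 1 = l := by simp [hv, Finsupp.single_apply]
  have hXmon : (X 0 : R2) ^ (m/a) * X 1 ^ (n/a) = monomial v 1 := by
    rw [hma, hna, X_pow_eq_monomial, X_pow_eq_monomial, monomial_mul, one_mul]
  have hvtx : Q.coeff v = 1 := by
    by_contra hne
    apply hQvtx.2
    rw [hXmon]
    apply convexHull_mono
    apply Set.insert_subset_insert
    apply Set.image_mono
    intro d hd
    rw [Finset.mem_coe, MvPolynomial.mem_support_iff] at hd ⊢
    rw [MvPolynomial.coeff_sub, MvPolynomial.coeff_monomial]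
    by_cases hdv : v = d
    · rw [if_pos hdv, ← hdv]
      exact sub_ne_zero.mpr hne
    · rw [if_neg hdv, sub_zero]
      exact hd
  -- support facts for F - Q^a
  have hRsupp : ∀ d ∈ (F - Q ^ a).support,
      toR2pt d ∈ Tset (m:ℝ) (n:ℝ) ∧ toR2pt d ∉ NsetPP m n a := by
    intro d hd
    have := hR (Set.mem_image_of_mem toR2pt (Finset.mem_coe.mpr hd))
    exact this
  have hm1 : ((a:ℝ)-1)*m/a = ((a:ℝ)-1)*k := by rw [hmk]; push_cast; field_simp
  have hn1 : ((a:ℝ)-1)*n/a = ((a:ℝ)-1)*l := by rw [hnl]; push_cast; field_simp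
  have G3 : ∀ d ∈ (F - Q ^ a).support, d 1 = n → d 0 < (a-1)*k := by
    intro d hd hd1
    by_contra h'
    push_neg at h'
    obtain ⟨hT, hNot⟩ := hRsupp d hd
    obtain ⟨t1, t2, t3, t4⟩ := hT
    simp only [toR2pt] at t1 t2 t3 t4
    apply hNot
    refine ⟨((d 0:ℝ) - ((a:ℝ)-1)*k, (l:ℝ)), ⟨?_, ?_, ?_, ?_⟩, ?_⟩
    · dsimp only; positivity
    · dsimp only; exact le_of_eq hnr.symm
    · dsimp only
      have hcast : (((a-1)*k : ℕ) : ℝ) = ((a:ℝ)-1)*k := by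
        push_cast [Nat.cast_sub (by omega : 1 ≤ a)]; ring
      have hle := (Nat.cast_le (α := ℝ)).mpr h'
      rw [hcast] at hle
      linarith
    · dsimp only
      rw [hmr, hnr]
      have hd0m : (d 0 : ℝ) ≤ m := by
        rw [hd1] at t4
        push_cast at t4 ⊢
        linarith
      have hmak : (m:ℝ) = a * k := by rw [hmk]; push_cast; ring
      rw [hmak] at hd0m
      have : (d 0:ℝ) - ((a:ℝ)-1)*k ≤ k := by linarith
      linarith
    · simp only [Prod.mk.injEq, toR2pt]
      constructor
      · rw [hm1]; ring
      · rw [hn1, hd1]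
        have : (n:ℝ) = a * l := by rw [hnl]; push_cast; ring
        rw [this]; ring
  have G4 : ∀ d ∈ (F - Q ^ a).support, d 0 + d 1 = m + n → d 1 < (a-1)*l := by
    intro d hd hd1
    by_contra h'
    push_neg at h'
    obtain ⟨hT, hNot⟩ := hRsupp d hd
    obtain ⟨t1, t2, t3, t4⟩ := hT
    simp only [toR2pt] at t1 t2 t3 t4
    apply hNot
    have hcast : (((a-1)*l : ℕ) : ℝ) = ((a:ℝ)-1)*l := by
      push_cast [Nat.cast_sub (by omega : 1 ≤ a)]; ring
    have hcastle : ((a:ℝ)-1)*l ≤ d 1 := by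
      have := (Nat.cast_le (α := ℝ)).mpr h'
      rw [hcast] at this
      exact this
    have hnal : (n:ℝ) = a * l := by rw [hnl]; push_cast; ring
    have hmak : (m:ℝ) = a * k := by rw [hmk]; push_cast; ring
    have hsum : (d 0:ℝ) + d 1 = m + n := by exact_mod_cast congrArg (Nat.cast : ℕ → ℝ) hd1
    refine ⟨((d 0:ℝ) - ((a:ℝ)-1)*k, (d 1:ℝ) - ((a:ℝ)-1)*l), ⟨?_, ?_, ?_, ?_⟩, ?_⟩
    · dsimp only; linarith
    · dsimp only
      rw [hnr]
      have h9 : (d 1:ℝ) ≤ n := t2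
      rw [hnal] at h9
      linarith
    · dsimp only
      have h9 : (d 1:ℝ) ≤ n := t2
      rw [hnal] at h9
      have h8 : (d 0:ℝ) ≥ m + n - (a:ℝ)*l := by rw [hnal] at hsum; linarith
      rw [hmak, hnal] at h8
      nlinarith [hk1, hl1]
    · dsimp only
      rw [hmr, hnr]
      rw [hmak, hnal] at hsum
      linarith
    · simp only [Prod.mk.injEq, toR2pt]
      constructor
      · rw [hm1]; ring
      · rw [hn1]; ring
  -- weights
  set w01 : (Fin 2 →₀ ℕ) → ℕ := fun d => d 1 with hw01def
  set w11 : (Fin 2 →₀ ℕ) → ℕ := fun d => d 0 + d 1 with hw11def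
  have hw01 : ∀ u v : Fin 2 →₀ ℕ, w01 (u + v) = w01 u + w01 v := by
    intro u v; simp [hw01def]
  have hw01z : w01 0 = 0 := rfl
  have hw11 : ∀ u v : Fin 2 →₀ ℕ, w11 (u + v) = w11 u + w11 v := by
    intro u v; simp [hw11def]; ring
  have hw11z : w11 0 = 0 := rfl
  constructor
  -- PART 1
  · set S : R2 := compGen w01 Q l with hS
    have hsuppS : ∀ d ∈ S.support, d 1 = l := fun d hd => (supp_compGen w01 Q l d hd).2
    have hsuppSQ : ∀ d ∈ S.support, d ∈ Q.support := fun d hd => (supp_compGen w01 Q l d hd).1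
    have hQ1 : ∀ d ∈ Q.support, w01 d ≤ l := fun d hd => (suppQ d hd).1
    have hpow := compGen_pow w01 hw01 hw01z Q l hQ1 a
    set E1 : R2 := compGen w01 (F - Q ^ a) n with hE1
    have hsplit : (X 0 + 1:R2)^m * X 1^n = S ^ a + E1 := by
      rw [← hF01, comp01_eq]
      have hFdecomp : F = Q ^ a + (F - Q ^ a) := by ring
      conv_lhs => rw [hFdecomp]
      have : compGen (fun d => d 1) (Q ^ a + (F - Q ^ a)) n
          = compGen w01 (Q ^ a) n + compGen w01 (F - Q ^ a) n := compGen_add _ _ _ _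
      rw [this]
      congr 1
      rw [hnl]
      exact hpow.2
    -- apply the evaluation X0 -> X, X1 -> 1
    set φ := aeval (R := ℂ) ![Polynomial.X, (1 : Polynomial ℂ)] with hφ
    set s : Polynomial ℂ := φ S with hs
    have hsuppE1 : ∀ d ∈ E1.support, d 1 = n :=
      fun d hd => (supp_compGen w01 (F - Q ^ a) n d hd).2
    set e : Polynomial ℂ := -(φ E1) with he
    have heC : ∀ j, (a-1)*k ≤ j → e.coeff j = 0 := by
      intro j hj
      rw [he, Polynomial.coeff_neg, hφ, eval1_coeff E1 n hsuppE1 j, neg_eq_zero]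
      by_contra hc
      have hmem := MvPolynomial.mem_support_iff.mpr hc
      have hd1 := (supp_compGen w01 (F - Q ^ a) n _ hmem).1
      have h0 : (Finsupp.single 0 j + Finsupp.single 1 n : Fin 2 →₀ ℕ) 0 = j := by
        simp [Finsupp.single_apply]
      have h1 : (Finsupp.single 0 j + Finsupp.single 1 n : Fin 2 →₀ ℕ) 1 = n := by
        simp [Finsupp.single_apply]
      have := G3 _ hd1 h1
      omega
    have hsdeg : s.natDegree ≤ k := by
      apply Polynomial.natDegree_le_iff_coeff_eq_zero.mpr
      intro j hjk
      rw [hs, hφ, eval1_coeff S l hsuppS j]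
      by_contra hc
      have hmem := MvPolynomial.mem_support_iff.mpr hc
      have hQm := hsuppSQ _ hmem
      have h0 : (Finsupp.single 0 j + Finsupp.single 1 l : Fin 2 →₀ ℕ) 0 = j := by
        simp [Finsupp.single_apply]
      have h1 : (Finsupp.single 0 j + Finsupp.single 1 l : Fin 2 →₀ ℕ) 1 = l := by
        simp [Finsupp.single_apply]
      have := (suppQ _ hQm).2
      omega
    have hscoeff : s.coeff k = 1 := by
      rw [hs, hφ, eval1_coeff S l hsuppS k, ← hv]
      rw [hS, coeff_compGen]
      rw [if_pos (by simp [hw01def, hv1])]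
      exact hvtx
    have hseq : s ^ a = (Polynomial.X + 1)^(a*k) + e := by
      have h0 := congrArg (fun p => φ p) hsplit
      simp only [map_add, map_mul, map_pow, map_one] at h0
      rw [show φ (X 0) = Polynomial.X from by rw [hφ]; simp,
          show φ (X 1) = 1 from by rw [hφ]; simp] at h0
      rw [hs, he, ← hmk]
      linear_combination -h0
    have hfinal := polyroot a k ha hk1 s e hsdeg hscoeff heC hseq
    -- now conclude
    rw [comp01_eq, hna, ← hS]
    apply slice1_eq S _ l hsuppS
    · -- support of target
      intro d hd
      have h1 : ∀ d ∈ ((X 0 + 1 : R2) ^ (m/a)).support, w01 d = 0 := by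
        intro d' hd'
        have h0 := supp_w_pow w01 hw01 hw01z supp_X0add1 (m/a) d' hd'
        simpa using h0
      have h2 : ∀ d ∈ ((X 1 : R2) ^ l).support, w01 d = l := by
        intro d' hd'
        rw [X_pow_eq_monomial, MvPolynomial.support_monomial] at hd'
        simp only [one_ne_zero, if_false, Finset.mem_singleton] at hd'
        rw [hd']
        simp [hw01def, Finsupp.single_apply]
      have h3 := supp_w_mul w01 hw01 h1 h2 d hd
      simp only [hw01def] at h3
      omega
    · -- φ of both sides agree
      rw [← hs, hfinal]
      simp only [map_mul, map_pow, map_add, map_one]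
      rw [show φ (X 0) = Polynomial.X from by rw [hφ]; simp,
          show φ (X 1) = 1 from by rw [hφ]; simp, hma]
      ring
  -- PART 2
  · set S : R2 := compGen w11 Q (k + l) with hS
    have hsuppS : ∀ d ∈ S.support, d 0 + d 1 = k + l :=
      fun d hd => (supp_compGen w11 Q (k+l) d hd).2
    have hsuppSQ : ∀ d ∈ S.support, d ∈ Q.support := fun d hd => (supp_compGen w11 Q (k+l) d hd).1
    have hQ1 : ∀ d ∈ Q.support, w11 d ≤ k + l := fun d hd => (suppQ d hd).2
    have hpow := compGen_pow w11 hw11 hw11z Q (k+l) hQ1 a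
    set E1 : R2 := compGen w11 (F - Q ^ a) (m + n) with hE1
    have hsplit : (X 0:R2)^m * (X 0 + X 1)^n = S ^ a + E1 := by
      rw [← hF11, comp11_eq]
      have hFdecomp : F = Q ^ a + (F - Q ^ a) := by ring
      conv_lhs => rw [hFdecomp]
      have : compGen (fun d => d 0 + d 1) (Q ^ a + (F - Q ^ a)) (m + n)
          = compGen w11 (Q ^ a) (m+n) + compGen w11 (F - Q ^ a) (m+n) := compGen_add _ _ _ _
      rw [this]
      congr 1
      rw [show m + n = a * (k + l) from by rw [hmk, hnl]; ring]
      exact hpow.2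
    set φ := aeval (R := ℂ) ![(1 : Polynomial ℂ), Polynomial.X] with hφ
    set s : Polynomial ℂ := φ S with hs
    have hsuppE1 : ∀ d ∈ E1.support, d 0 + d 1 = m + n :=
      fun d hd => (supp_compGen w11 (F - Q ^ a) (m+n) d hd).2
    set e : Polynomial ℂ := -(φ E1) with he
    have heC : ∀ j, (a-1)*l ≤ j → e.coeff j = 0 := by
      intro j hj
      rw [he, Polynomial.coeff_neg, hφ, eval2_coeff E1 (m+n) hsuppE1 j, neg_eq_zero]
      by_contra hc
      have hmem := MvPolynomial.mem_support_iff.mpr hc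
      have hd1 := (supp_compGen w11 (F - Q ^ a) (m+n) _ hmem).1
      have hd2 := (supp_compGen w11 (F - Q ^ a) (m+n) _ hmem).2
      have h1 : (Finsupp.single 0 (m+n-j) + Finsupp.single 1 j : Fin 2 →₀ ℕ) 1 = j := by
        simp [Finsupp.single_apply]
      have h0 : (Finsupp.single 0 (m+n-j) + Finsupp.single 1 j : Fin 2 →₀ ℕ) 0 = m+n-j := by
        simp [Finsupp.single_apply]
      have hdsum : (Finsupp.single 0 (m+n-j) + Finsupp.single 1 j : Fin 2 →₀ ℕ) 0
          + (Finsupp.single 0 (m+n-j) + Finsupp.single 1 j : Fin 2 →₀ ℕ) 1 = m + n := by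
        simp only [hw11def] at hd2; exact hd2
      have := G4 _ hd1 hdsum
      rw [h1] at this
      omega
    have hsdeg : s.natDegree ≤ l := by
      apply Polynomial.natDegree_le_iff_coeff_eq_zero.mpr
      intro j hjl
      rw [hs, hφ, eval2_coeff S (k+l) hsuppS j]
      by_contra hc
      have hmem := MvPolynomial.mem_support_iff.mpr hc
      have hQm := hsuppSQ _ hmem
      have h1 : (Finsupp.single 0 (k+l-j) + Finsupp.single 1 j : Fin 2 →₀ ℕ) 1 = j := by
        simp [Finsupp.single_apply]
      have := (suppQ _ hQm).1
      omega
    have hscoeff : s.coeff l = 1 := by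
      rw [hs, hφ, eval2_coeff S (k+l) hsuppS l]
      rw [show k + l - l = k from by omega, ← hv]
      rw [hS, coeff_compGen]
      rw [if_pos (by simp [hw11def, hv0, hv1])]
      exact hvtx
    have hseq : s ^ a = (Polynomial.X + 1)^(a*l) + e := by
      have h0 := congrArg (fun p => φ p) hsplit
      simp only [map_add, map_mul, map_pow, map_one] at h0
      rw [show φ (X 0) = 1 from by rw [hφ]; simp,
          show φ (X 1) = Polynomial.X from by rw [hφ]; simp] at h0
      rw [hs, he, ← hnl]
      linear_combination -h0
    have hfinal := polyroot a l ha hl1 s e hsdeg hscoeff heC hseq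
    rw [comp11_eq, hmna, ← hS]
    apply slice2_eq S _ (k + l) hsuppS
    · have h1 : ∀ d ∈ ((X 0 : R2) ^ (m/a)).support, w11 d = k := by
        intro d hd
        rw [X_pow_eq_monomial, MvPolynomial.support_monomial] at hd
        simp only [one_ne_zero, if_false, Finset.mem_singleton] at hd
        rw [hd, hw11def]
        simp [Finsupp.single_apply, hma]
      have h2 : ∀ d ∈ ((X 0 + X 1 : R2) ^ (n/a)).support, w11 d = l := by
        have := supp_w_pow w11 hw11 hw11z supp_X0addX1 (n/a)
        intro d hd
        have := this d hd
        rw [this, hna, mul_one]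
      intro d hd
      have h3 := supp_w_mul w11 hw11 h1 h2 d hd
      simp only [hw11def] at h3
      exact h3
    · rw [← hs, hfinal]
      simp only [map_mul, map_pow, map_add, map_one]
      rw [show φ (X 0) = 1 from by rw [hφ]; simp,
          show φ (X 1) = Polynomial.X from by rw [hφ]; simp, hna]
      ring
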